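/- Every chordal graph that is not complete has two non-adjacent simplicial vertices. -/

import Mathlib

def IsChordal {V : Type*} (G : SimpleGraph V) : Prop :=
  ∀ n : ℕ, 4 ≤ n → IsEmpty (SimpleGraph.cycleGraph n ↪g G)

def IsSimplicialVertex {V : Type*} (G : SimpleGraph V) (v : V) : Prop :=
  G.IsClique (G.neighborSet v)

def IsNConnectedGraph {V : Type*} [Fintype V] (n : ℕ) (G : SimpleGraph V) : Prop :=
  n < Fintype.card V ∧ ∀ S : Finset V, S.card < n → (G.induce ((↑S : Set V)ᶜ)).Connected

def IsVertexCut {V : Type*} [Fintype V] (G : SimpleGraph V) (S : Finset V) : Prop :=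
  ¬ (G.induce ((↑S : Set V)ᶜ)).Connected

def IsMinimalVertexCut {V : Type*} [Fintype V] (G : SimpleGraph V) (S : Finset V) : Prop :=
  IsVertexCut G S ∧ ∀ S' : Finset V, S'.card < S.card → (G.induce ((↑S' : Set V)ᶜ)).Connected

def IsMaximalClique {V : Type*} (G : SimpleGraph V) (s : Finset V) : Prop :=
  G.IsClique ↑s ∧ ∀ t : Finset V, G.IsClique ↑t → s ⊆ t → s = t

def nbhdFaces {V : Type*} (G : SimpleGraph V) : Set (Finset V) :=
  {σ | ∃ w, ∀ x ∈ σ, G.Adj w x}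

abbrev geomReal {V : Type*} (K : Set (Finset V)) : Type _ :=
  {f : V → ℝ // ∃ σ ∈ K, (∀ v, f v ≠ 0 → v ∈ σ) ∧ (∀ v, 0 ≤ f v) ∧ ∑ v ∈ σ, f v = 1}

def IsNConnectedSpace (k : ℤ) (X : Type*) [TopologicalSpace X] : Prop :=
  ∀ m : ℕ, (m : ℤ) ≤ k →
    ∀ f : C(Metric.sphere (0 : EuclideanSpace ℝ (Fin (m + 1))) 1, X),
      ∃ g : C(Metric.closedBall (0 : EuclideanSpace ℝ (Fin (m + 1))) 1, X),
        ∀ x : Metric.sphere (0 : EuclideanSpace ℝ (Fin (m + 1))) 1,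
          g ⟨x.1, Metric.sphere_subset_closedBall x.2⟩ = f x

structure SimpComplex (V : Type*) where
  faces : Set (Finset V)
  down_closed : ∀ σ ∈ faces, ∀ τ ⊆ σ, τ ∈ faces

def suspSetoid (X : Type*) : Setoid (X × unitInterval) where
  r p q := p = q ∨ (p.2 = 0 ∧ q.2 = 0) ∨ (p.2 = 1 ∧ q.2 = 1)
  iseqv := by
    constructor
    · intro p; exact Or.inl rfl
    · rintro p q (rfl | h | h) <;> tauto
    · rintro p q r (rfl | h | h) (h2 | h2 | h2) <;> simp_all <;> tauto

abbrev Susp (X : Type*) [TopologicalSpace X] : Type _ := Quotient (suspSetoid X)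

def queenGraph (m n : ℕ) : SimpleGraph (Fin m × Fin n) :=
  SimpleGraph.fromRel fun a b =>
    a.1 = b.1 ∨ a.2 = b.2 ∨ |((a.1 : ℕ) : ℤ) - ((b.1 : ℕ) : ℤ)| = |((a.2 : ℕ) : ℤ) - ((b.2 : ℕ) : ℤ)|

def kingGraph (m n : ℕ) : SimpleGraph (Fin m × Fin n) :=
  SimpleGraph.fromRel fun a b =>
    |((a.1 : ℕ) : ℤ) - ((b.1 : ℕ) : ℤ)| ≤ 1 ∧ |((a.2 : ℕ) : ℤ) - ((b.2 : ℕ) : ℤ)| ≤ 1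

open SimpleGraph

namespace ChordalAux

variable {V : Type*} {G : SimpleGraph V} {u v w : V}

lemma getVert_mem_support (p : G.Walk u v) (i : ℕ) : p.getVert i ∈ p.support := by
  rcases le_or_gt i p.length with h | h
  · exact Walk.mem_support_iff_exists_getVert.mpr ⟨i, rfl, h⟩
  · rw [p.getVert_of_length_le h.le]
    exact p.end_mem_support

lemma eq_of_length_zero (p : G.Walk u v) (h : p.length = 0) : u = v :=
  (p.getVert_zero).symm.trans (p.getVert_of_length_le (by omega))

lemma support_getElem (p : G.Walk u v) (i : ℕ) (h : i < p.support.length) :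
    p.support[i] = p.getVert i := by
  induction p generalizing i with
  | nil => simp at h; simp [h]
  | cons hadj q ih =>
    cases i with
    | zero => simp [Walk.getVert_zero]
    | succ i =>
      simp only [Walk.support_cons, List.getElem_cons_succ, Walk.getVert_cons_succ]
      have h' : i < q.support.length := by
        simp only [Walk.support_cons, List.length_cons] at h
        rw [Walk.length_support]
        rw [Walk.length_support] at h
        omega
      exact ih i h'

lemma IsPath.getVert_inj {p : G.Walk u v} (hp : p.IsPath) {i j : ℕ}
    (hi : i ≤ p.length) (hj : j ≤ p.length) (h : p.getVert i = p.getVert j) : i = j := by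
  have hnd := hp.support_nodup
  have hi' : i < p.support.length := by rw [Walk.length_support]; omega
  have hj' : j < p.support.length := by rw [Walk.length_support]; omega
  have h2 : p.support[i]'hi' = p.support[j]'hj' := by
    rw [support_getElem p i hi', support_getElem p j hj']; exact h
  exact (hnd.getElem_inj_iff).mp h2

lemma exists_suffix (p : G.Walk u v) (j : ℕ) (hj : j ≤ p.length) :
    ∃ r : G.Walk (p.getVert j) v, r.length + j = p.length ∧ ∀ x ∈ r.support, x ∈ p.support := by
  induction p generalizing j with
  | nil =>
    have hj0 : j = 0 := by simpa using hj
    subst hj0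
    exact ⟨Walk.nil.copy (Walk.getVert_zero _).symm rfl, by simp, by simp⟩
  | @cons a b c hadj q ih =>
    cases j with
    | zero =>
      exact ⟨(Walk.cons hadj q).copy (Walk.getVert_zero _).symm rfl, by simp, by simp⟩
    | succ j =>
      obtain ⟨r, hr1, hr2⟩ := ih j (by simpa [Walk.length_cons] using hj)
      refine ⟨r.copy (by simp [Walk.getVert_cons_succ]) rfl, by simpa using by omega, ?_⟩
      intro x hx
      have hx : x ∈ r.support := by simpa using hx
      simp [Walk.support_cons]
      exact Or.inr (hr2 x hx)

lemma exists_splice (p : G.Walk u v) (i j : ℕ) (hij : i < j) (hj : j ≤ p.length)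
    (h : G.Adj (p.getVert i) (p.getVert j)) :
    ∃ q : G.Walk u v, q.length + (j - i) = p.length + 1 ∧ ∀ x ∈ q.support, x ∈ p.support := by
  induction p generalizing i j with
  | nil => simp at hj; omega
  | @cons a b c hadj q ih =>
    cases i with
    | zero =>
      obtain ⟨r, hr1, hr2⟩ := exists_suffix (Walk.cons hadj q) j hj
      refine ⟨Walk.cons (by rwa [Walk.getVert_zero] at h) r, by
        simp only [Walk.length_cons] at hr1 ⊢; omega, ?_⟩
      intro x hx
      simp only [Walk.support_cons, List.mem_cons] at hx
      rcases hx with rfl | hx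
      · exact Walk.start_mem_support _
      · exact hr2 x hx
    | succ i =>
      cases j with
      | zero => omega
      | succ j =>
        obtain ⟨r, hr1, hr2⟩ := ih i j (by omega) (by simpa [Walk.length_cons] using hj)
          (by simpa [Walk.getVert_cons_succ] using h)
        refine ⟨Walk.cons hadj r, by simp [Walk.length_cons]; omega, ?_⟩
        intro x hx
        simp only [Walk.support_cons, List.mem_cons] at hx ⊢
        rcases hx with rfl | hx
        · exact Or.inl rfl
        · exact Or.inr (hr2 x hx)

/-- Vertices reachable from `a` by walks avoiding `S`. -/
def Reach (G : SimpleGraph V) (S : Finset V) (a : V) : Set V :=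
  {x | ∃ w : G.Walk a x, ∀ y ∈ w.support, y ∉ S}

lemma Reach.not_mem_S {S : Finset V} {a x : V} (hx : x ∈ Reach G S a) : x ∉ S := by
  obtain ⟨w, hw⟩ := hx
  exact hw x w.end_mem_support

lemma Reach.self {S : Finset V} {a : V} (ha : a ∉ S) : a ∈ Reach G S a :=
  ⟨Walk.nil, by simpa using ha⟩

lemma Reach.adj {S : Finset V} {a x y : V} (hx : x ∈ Reach G S a) (hadj : G.Adj x y)
    (hy : y ∉ S) : y ∈ Reach G S a := by
  obtain ⟨w, hw⟩ := hx
  refine ⟨w.concat hadj, ?_⟩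
  intro z hz
  simp only [Walk.support_concat, List.concat_eq_append, List.mem_append,
    List.mem_singleton] at hz
  rcases hz with hz | rfl
  · exact hw z hz
  · exact hy

lemma Reach.walk_subset {S : Finset V} {a x z : V} (w : G.Walk x z) (hx : x ∈ Reach G S a)
    (hw : ∀ y ∈ w.support, y ∉ S) : ∀ y ∈ w.support, y ∈ Reach G S a := by
  induction w with
  | nil => intro y hy; rw [Walk.mem_support_nil_iff] at hy; rwa [hy]
  | @cons c d e hadj q ih =>
    intro y hy
    have hd : d ∈ Reach G S a :=
      Reach.adj hx hadj (hw d (by simp [Walk.support_cons]))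
    rw [Walk.support_cons, List.mem_cons] at hy
    rcases hy with rfl | hy
    · exact hx
    · exact ih hd (fun z hz => hw z (by simp [Walk.support_cons, hz])) y hy

lemma Reach.conn {S : Finset V} {a x y : V} (hx : x ∈ Reach G S a) (hy : y ∈ Reach G S a) :
    ∃ w : G.Walk x y, ∀ z ∈ w.support, z ∈ Reach G S a := by
  obtain ⟨wx, hwx⟩ := hx
  obtain ⟨wy, hwy⟩ := hy
  refine ⟨wx.reverse.append wy, ?_⟩
  intro z hz
  rw [Walk.mem_support_append_iff] at hz
  rcases hz with hz | hz
  · rw [Walk.support_reverse, List.mem_reverse] at hz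
    exact Reach.walk_subset wx (Reach.self (hwx a wx.start_mem_support)) hwx z hz
  · exact Reach.walk_subset wy (Reach.self (hwy a wy.start_mem_support)) hwy z hz

lemma Reach.boundary {S : Finset V} {a x s : V} (w : G.Walk x s) (hx : x ∈ Reach G S a)
    (hs : s ∈ S) (hw : ∀ y ∈ w.support, y ∈ S → y = s) :
    ∃ t ∈ Reach G S a, G.Adj t s := by
  induction w with
  | nil =>
    exact absurd hs (by simpa using Reach.not_mem_S hx)
  | @cons c d e hadj q ih =>
    by_cases hd : d = e
    · subst hd
      exact ⟨c, hx, hadj⟩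
    · have hdS : d ∉ S := fun h => hd (hw d (by simp [Walk.support_cons]) h)
      exact ih (Reach.adj hx hadj hdS) hs (fun z hz => hw z (by simp [Walk.support_cons, hz]))

/-- `S` separates `a` from `b`. -/
def Separates (G : SimpleGraph V) (a b : V) (S : Finset V) : Prop :=
  a ∉ S ∧ b ∉ S ∧ ∀ w : G.Walk a b, ∃ x ∈ w.support, x ∈ S

lemma separates_exists [Fintype V] [DecidableEq V] {a b : V} (hab : a ≠ b) (hnadj : ¬ G.Adj a b) :
    Separates G a b (Finset.univ \ {a, b}) := by
  refine ⟨by simp, by simp [hab], ?_⟩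
  intro w
  have h1 : 1 ≤ w.length := by
    rcases Nat.eq_zero_or_pos w.length with h | h
    · exact absurd (eq_of_length_zero w h) hab
    · omega
  refine ⟨w.getVert 1, getVert_mem_support w 1, ?_⟩
  have hadj : G.Adj a (w.getVert 1) := by
    have := w.adj_getVert_succ (i := 0) (by omega)
    rwa [w.getVert_zero] at this
  simp only [Finset.mem_sdiff, Finset.mem_univ, Finset.mem_insert, Finset.mem_singleton,
    true_and]
  push_neg
  constructor
  · intro h; exact G.irrefl (h ▸ hadj)
  · intro h; exact hnadj (h ▸ hadj)

lemma reach_disjoint {S : Finset V} {a b : V} (hsep : Separates G a b S) {x : V}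
    (hxa : x ∈ Reach G S a) (hxb : x ∈ Reach G S b) : False := by
  obtain ⟨wa, hwa⟩ := hxa
  obtain ⟨wb, hwb⟩ := hxb
  obtain ⟨y, hy, hyS⟩ := hsep.2.2 (wa.append wb.reverse)
  rw [Walk.mem_support_append_iff] at hy
  rcases hy with hy | hy
  · exact hwa y hy hyS
  · rw [Walk.support_reverse, List.mem_reverse] at hy
    exact hwb y hy hyS

lemma reach_nonadj {S : Finset V} {a b : V} (hsep : Separates G a b S) {x y : V}
    (hxa : x ∈ Reach G S a) (hyb : y ∈ Reach G S b) : x ≠ y ∧ ¬ G.Adj x y := by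
  constructor
  · rintro rfl; exact reach_disjoint hsep hxa hyb
  · intro hadj
    exact reach_disjoint hsep (Reach.adj hxa hadj (Reach.not_mem_S hyb)) hyb

/-- Every vertex of a minimum-size separator has neighbours in both sides. -/
lemma min_sep_neighbors [DecidableEq V] {S : Finset V} {a b : V} (hsep : Separates G a b S)
    (hmin : ∀ S' : Finset V, Separates G a b S' → S.card ≤ S'.card) {s : V} (hs : s ∈ S) :
    (∃ t ∈ Reach G S a, G.Adj t s) ∧ (∃ t ∈ Reach G S b, G.Adj t s) := by
  have herase : ¬ Separates G a b (S.erase s) := by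
    intro h
    have := hmin _ h
    have := Finset.card_erase_lt_of_mem hs
    omega
  rw [Separates] at herase
  push_neg at herase
  obtain ⟨w, hw⟩ := herase (fun h => hsep.1 (Finset.mem_of_mem_erase h))
    (fun h => hsep.2.1 (Finset.mem_of_mem_erase h))
  have hw' : ∀ x ∈ w.support, x ∈ S → x = s := by
    intro x hx hxS
    by_contra hxs
    exact hw x hx (Finset.mem_erase.mpr ⟨hxs, hxS⟩)
  have hsw : s ∈ w.support := by
    obtain ⟨x, hx, hxS⟩ := hsep.2.2 w
    rwa [← hw' x hx hxS]
  constructor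
  · exact Reach.boundary (w.takeUntil s hsw) (Reach.self hsep.1) hs
      (fun y hy => hw' y (w.support_takeUntil_subset hsw hy))
  · refine Reach.boundary (w.dropUntil s hsw).reverse (Reach.self hsep.2.1) hs ?_
    intro y hy
    rw [Walk.support_reverse, List.mem_reverse] at hy
    exact hw' y (w.support_dropUntil_subset hsw hy)


lemma exists_min_path {u v : V} (C : V → Prop) (w₀ : G.Walk u v) (h₀ : ∀ x ∈ w₀.support, C x) :
    ∃ p : G.Walk u v, p.IsPath ∧ (∀ x ∈ p.support, C x) ∧
      ∀ w : G.Walk u v, (∀ x ∈ w.support, C x) → p.length ≤ w.length := by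
  classical
  have hex : ∃ k, ∃ w : G.Walk u v, w.length = k ∧ ∀ x ∈ w.support, C x := ⟨_, w₀, rfl, h₀⟩
  obtain ⟨w₁, hw₁len, hw₁C⟩ := Nat.find_spec hex
  refine ⟨w₁.bypass, w₁.bypass_isPath, fun x hx => hw₁C x (w₁.support_bypass_subset hx), ?_⟩
  intro w hw
  calc w₁.bypass.length ≤ w₁.length := w₁.length_bypass_le
    _ ≤ w.length := by rw [hw₁len]; exact Nat.find_min' hex ⟨w, rfl, hw⟩

lemma min_chordfree {u v : V} {C : V → Prop} {p : G.Walk u v} (hpC : ∀ x ∈ p.support, C x)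
    (hmin : ∀ w : G.Walk u v, (∀ x ∈ w.support, C x) → p.length ≤ w.length)
    {i j : ℕ} (hij : i + 2 ≤ j) (hj : j ≤ p.length) : ¬ G.Adj (p.getVert i) (p.getVert j) := by
  intro h
  obtain ⟨q, hq1, hq2⟩ := exists_splice p i j (by omega) hj h
  have := hmin q (fun x hx => hpC x (hq2 x hx))
  omega

lemma interior_mem {u v : V} {A : Set V} {p : G.Walk u v} (hp : p.IsPath)
    (hC : ∀ x ∈ p.support, x = u ∨ x = v ∨ x ∈ A) {i : ℕ} (h0 : 0 < i) (hi : i < p.length) :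
    p.getVert i ∈ A := by
  rcases hC _ (getVert_mem_support p i) with h | h | h
  · have : i = 0 := IsPath.getVert_inj hp (by omega) (by omega) (h.trans p.getVert_zero.symm)
    omega
  · have : i = p.length := IsPath.getVert_inj hp (by omega) le_rfl
      (by rw [h, p.getVert_length])
    omega
  · exact h

lemma two_le_length {u v : V} (p : G.Walk u v) (hne : u ≠ v) (hnadj : ¬ G.Adj u v) :
    2 ≤ p.length := by
  by_contra h
  push_neg at h
  interval_cases hl : p.length
  · exact hne (eq_of_length_zero p hl)
  · apply hnadj
    have := p.adj_getVert_succ (i := 0) (by omega)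
    rwa [p.getVert_zero, show p.getVert 1 = v from p.getVert_of_length_le (by omega)] at this

lemma fin_sub_val_eq_one {n : ℕ} (hn : 2 ≤ n) (i j : Fin n) :
    (i - j).val = 1 ↔ (i.val = j.val + 1 ∨ (j.val = n - 1 ∧ i.val = 0)) := by
  have hi := i.isLt
  have hj := j.isLt
  rw [Fin.sub_def]
  simp only
  rcases Nat.lt_or_ge (n - j.val + i.val) n with h | h
  · rw [Nat.mod_eq_of_lt h]; omega
  · have h2 : (n - j.val + i.val) % n = n - j.val + i.val - n := by
      rw [Nat.mod_eq_sub_mod h, Nat.mod_eq_of_lt (by omega)]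
    rw [h2]; omega

lemma no_induced_cycle (hch : IsChordal G) {u v : V} (hne : u ≠ v) (hnadj : ¬ G.Adj u v)
    {A B : Set V} (hABne : ∀ x ∈ A, ∀ y ∈ B, x ≠ y) (hABadj : ∀ x ∈ A, ∀ y ∈ B, ¬ G.Adj x y)
    (huB : u ∉ B)
    (p q : G.Walk u v) (hp : p.IsPath) (hq : q.IsPath)
    (hpA : ∀ x ∈ p.support, x = u ∨ x = v ∨ x ∈ A)
    (hqB : ∀ x ∈ q.support, x = u ∨ x = v ∨ x ∈ B)
    (hpmin : ∀ w : G.Walk u v, (∀ x ∈ w.support, x = u ∨ x = v ∨ x ∈ A) → p.length ≤ w.length)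
    (hqmin : ∀ w : G.Walk u v, (∀ x ∈ w.support, x = u ∨ x = v ∨ x ∈ B) → q.length ≤ w.length) :
    False := by
  have hp2 : 2 ≤ p.length := two_le_length p hne hnadj
  have hq2 : 2 ≤ q.length := two_le_length q hne hnadj
  obtain ⟨n, hn⟩ : ∃ n, n = p.length + q.length := ⟨_, rfl⟩
  have hn4 : 4 ≤ n := by omega
  set f : Fin n → V := fun i => if i.val ≤ p.length then p.getVert i.val
    else q.getVert (n - i.val) with hf
  have hfp : ∀ i : Fin n, i.val ≤ p.length → f i = p.getVert i.val := by
    intro i hi; simp only [hf, if_pos hi]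
  have hfq : ∀ i : Fin n, p.length ≤ i.val → f i = q.getVert (n - i.val) := by
    intro i hi
    rcases eq_or_lt_of_le hi with h | h
    · simp only [hf, if_pos h.symm.le]
      rw [← h, p.getVert_length, show n - p.length = q.length by omega, q.getVert_length]
    · have hc : ¬ (i.val ≤ p.length) := by omega
      simp only [hf, if_neg hc]
  have hAint : ∀ i : ℕ, 0 < i → i < p.length → p.getVert i ∈ A :=
    fun i h1 h2 => interior_mem hp hpA h1 h2
  have hBint : ∀ i : ℕ, 0 < i → i < q.length → q.getVert i ∈ B :=
    fun i h1 h2 => interior_mem hq hqB h1 h2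
  have hpc : ∀ i j : ℕ, i + 2 ≤ j → j ≤ p.length → ¬ G.Adj (p.getVert i) (p.getVert j) :=
    fun i j h1 h2 => min_chordfree hpA hpmin h1 h2
  have hqc : ∀ i j : ℕ, i + 2 ≤ j → j ≤ q.length → ¬ G.Adj (q.getVert i) (q.getVert j) :=
    fun i j h1 h2 => min_chordfree hqB hqmin h1 h2
  have hltne : ∀ i j : Fin n, i.val < j.val → f i ≠ f j := by
    intro i j hij heq
    rcases le_or_gt j.val p.length with hjpl | hjpl
    · rw [hfp i (by omega), hfp j hjpl] at heq
      have := IsPath.getVert_inj hp (by omega) (by omega) heq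
      omega
    · rcases le_or_gt p.length i.val with hipl | hipl
      · rw [hfq i hipl, hfq j (by omega)] at heq
        have := IsPath.getVert_inj hq (i := n - i.val) (j := n - j.val)
          (by omega) (by omega) heq
        omega
      · have hfjB : f j ∈ B := by
          rw [hfq j (by omega)]
          exact hBint _ (by omega) (by omega)
        rcases Nat.eq_zero_or_pos i.val with h0 | h0
        · have hfi : f i = u := by rw [hfp i (by omega), h0, p.getVert_zero]
          exact huB ((hfi ▸ heq) ▸ hfjB)
        · have hfiA : f i ∈ A := by rw [hfp i (by omega)]; exact hAint _ h0 hipl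
          exact hABne _ hfiA _ hfjB heq
  have hinj : Function.Injective f := by
    intro i j h
    rcases Nat.lt_trichotomy i.val j.val with hlt' | he | hlt'
    · exact absurd h (hltne i j hlt')
    · exact Fin.val_injective he
    · exact absurd h.symm (hltne j i hlt')
  have hnoadj : ∀ i j : Fin n, i.val + 2 ≤ j.val → ¬(i.val = 0 ∧ j.val = n - 1) →
      ¬ G.Adj (f i) (f j) := by
    intro i j hij hwrap
    rcases le_or_gt j.val p.length with hjpl | hjpl
    · rw [hfp i (by omega), hfp j hjpl]
      exact hpc _ _ hij hjpl
    · rcases le_or_gt p.length i.val with hipl | hipl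
      · rw [hfq i hipl, hfq j (by omega)]
        intro h
        exact hqc (n - j.val) (n - i.val) (by omega) (by omega) h.symm
      · rcases Nat.eq_zero_or_pos i.val with h0 | h0
        · have hfi : f i = q.getVert 0 := by
            rw [hfp i (by omega), h0, p.getVert_zero, q.getVert_zero]
          rw [hfi, hfq j (by omega)]
          exact hqc 0 (n - j.val) (by omega) (by omega)
        · have hfiA : f i ∈ A := by rw [hfp i (by omega)]; exact hAint _ h0 hipl
          have hfjB : f j ∈ B := by
            rw [hfq j (by omega)]
            exact hBint _ (by omega) (by omega)
          exact hABadj _ hfiA _ hfjB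
  have hsucc : ∀ i j : Fin n, j.val = i.val + 1 → G.Adj (f i) (f j) := by
    intro i j hij
    rcases le_or_gt j.val p.length with hjpl | hjpl
    · rw [hfp i (by omega), hfp j hjpl, hij]
      exact p.adj_getVert_succ (by omega)
    · rw [hfq i (by omega), hfq j (by omega),
        show n - i.val = (n - j.val) + 1 by omega]
      exact (q.adj_getVert_succ (by omega)).symm
  have hwrapadj : ∀ i j : Fin n, i.val = n - 1 → j.val = 0 → G.Adj (f i) (f j) := by
    intro i j hi hj
    have h1 : f i = q.getVert 1 := by
      rw [hfq i (by omega), hi, show n - (n - 1) = 1 by omega]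
    have h2 : f j = q.getVert 0 := by
      rw [hfp j (by omega), hj, p.getVert_zero, q.getVert_zero]
    rw [h1, h2]
    exact (q.adj_getVert_succ (by omega)).symm
  haveI : NeZero n := ⟨by omega⟩
  have e : SimpleGraph.cycleGraph n ↪g G := by
    refine ⟨⟨f, hinj⟩, ?_⟩
    intro i j
    simp only [Function.Embedding.coeFn_mk]
    rw [SimpleGraph.cycleGraph_adj', fin_sub_val_eq_one (by omega) i j,
      fin_sub_val_eq_one (by omega) j i]
    constructor
    · intro h
      by_contra hcon
      push_neg at hcon
      obtain ⟨hc1, hc2⟩ := hcon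
      rcases Nat.lt_trichotomy i.val j.val with hlt' | he | hlt'
      · exact hnoadj i j (by omega) (by omega) h
      · rw [Fin.val_injective he] at h
        exact G.irrefl h
      · exact hnoadj j i (by omega) (by omega) h.symm
    · rintro ((h | ⟨h1, h2⟩) | (h | ⟨h1, h2⟩))
      · exact (hsucc j i h).symm
      · exact (hwrapadj j i h1 h2).symm
      · exact hsucc i j h
      · exact hwrapadj i j h1 h2
  exact (hch n hn4).false e

lemma sep_clique [DecidableEq V] (hch : IsChordal G) {a b : V} {S : Finset V}
    (hsep : Separates G a b S)
    (hmin : ∀ S' : Finset V, Separates G a b S' → S.card ≤ S'.card) :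
    G.IsClique (S : Set V) := by
  intro u hu v hv hne
  by_contra hnadj
  have huS : u ∈ S := hu
  have hvS : v ∈ S := hv
  obtain ⟨⟨au, hau, haus⟩, ⟨bu, hbu, hbus⟩⟩ := min_sep_neighbors hsep hmin huS
  obtain ⟨⟨av, hav, havs⟩, ⟨bv, hbv, hbvs⟩⟩ := min_sep_neighbors hsep hmin hvS
  obtain ⟨wA, hwA⟩ := Reach.conn hau hav
  obtain ⟨wB, hwB⟩ := Reach.conn hbu hbv
  have hp₀ : ∀ x ∈ (Walk.cons haus.symm (wA.concat havs)).support,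
      x = u ∨ x = v ∨ x ∈ Reach G S a := by
    intro x hx
    simp only [Walk.support_cons, List.mem_cons] at hx
    rcases hx with rfl | hx
    · exact Or.inl rfl
    · rw [Walk.support_concat, List.mem_append,
        List.mem_singleton] at hx
      rcases hx with hx | rfl
      · exact Or.inr (Or.inr (hwA x hx))
      · exact Or.inr (Or.inl rfl)
  have hq₀ : ∀ x ∈ (Walk.cons hbus.symm (wB.concat hbvs)).support,
      x = u ∨ x = v ∨ x ∈ Reach G S b := by
    intro x hx
    simp only [Walk.support_cons, List.mem_cons] at hx
    rcases hx with rfl | hx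
    · exact Or.inl rfl
    · rw [Walk.support_concat, List.mem_append,
        List.mem_singleton] at hx
      rcases hx with hx | rfl
      · exact Or.inr (Or.inr (hwB x hx))
      · exact Or.inr (Or.inl rfl)
  obtain ⟨p, hp, hpA, hpmin⟩ := exists_min_path _ _ hp₀
  obtain ⟨q, hq, hqB, hqmin⟩ := exists_min_path _ _ hq₀
  exact no_induced_cycle hch hne hnadj
    (fun x hx y hy => (reach_nonadj hsep hx hy).1)
    (fun x hx y hy => (reach_nonadj hsep hx hy).2)
    (fun h => Reach.not_mem_S h huS)
    p q hp hq hpA hqB hpmin hqmin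

lemma chordal_induce {G : SimpleGraph V} (hch : IsChordal G) (s : Set V) :
    IsChordal (G.induce s) :=
  fun n hn => ⟨fun e => (hch n hn).false ((SimpleGraph.Embedding.induce s).comp e)⟩

universe u

lemma side_lemma {n : ℕ} {V : Type u} [Fintype V] {G : SimpleGraph V}
    (IH : ∀ (W : Type u) [Fintype W] (H : SimpleGraph W), Fintype.card W ≤ n → IsChordal H →
      H = ⊤ ∨ ∃ x y, x ≠ y ∧ ¬H.Adj x y ∧ IsSimplicialVertex H x ∧ IsSimplicialVertex H y)
    (hch : IsChordal G)
    {S : Finset V} (hScl : G.IsClique (S : Set V))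
    {A : Set V} (hAS : ∀ x ∈ A, x ∉ S)
    (hclos : ∀ x ∈ A, ∀ y, G.Adj x y → y ∉ S → y ∈ A)
    {a b : V} (ha : a ∈ A) (hbA : b ∉ A) (hbS : b ∉ S)
    (hcard : Fintype.card V ≤ n + 1) :
    ∃ x ∈ A, IsSimplicialVertex G x := by
  classical
  set s : Set V := A ∪ ↑S with hs
  have hbs : b ∉ s := by
    rw [hs]
    rintro (h | h)
    · exact hbA h
    · exact hbS h
  have hcards : Fintype.card ↥s ≤ n := by
    have h := Fintype.card_lt_of_injective_of_notMem (Subtype.val : ↥s → V)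
      Subtype.val_injective (b := b) (by rwa [Subtype.range_val])
    have h2 : Fintype.card {x // x ∈ s} = Fintype.card ↥s := Fintype.card_congr (Equiv.refl _)
    omega
  have hmem : ∀ x : V, x ∈ A → ∀ y, G.Adj x y → y ∈ s := by
    intro x hx y hxy
    by_cases hyS : y ∈ S
    · exact Or.inr hyS
    · exact Or.inl (hclos x hx y hxy hyS)
  rcases IH ↥s (G.induce s) hcards (chordal_induce hch s) with htop | ⟨x, y, hxy, hnadj, hx, hy⟩
  · refine ⟨a, ha, ?_⟩
    intro y hy z hz hyz
    have hys : y ∈ s := hmem a ha y hy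
    have hzs : z ∈ s := hmem a ha z hz
    have hadj : (G.induce s).Adj ⟨y, hys⟩ ⟨z, hzs⟩ := by
      rw [htop, SimpleGraph.top_adj]
      simp only [ne_eq, Subtype.mk.injEq]
      exact hyz
    exact hadj
  · have hone : ∃ z : ↥s, (z : V) ∈ A ∧ IsSimplicialVertex (G.induce s) z := by
      by_cases hxS : (x : V) ∈ S
      · by_cases hyS : (y : V) ∈ S
        · exfalso
          apply hnadj
          have : G.Adj x y := hScl hxS hyS (fun h => hxy (Subtype.ext h))
          exact this
        · refine ⟨y, ?_, hy⟩
          rcases y.2 with h | h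
          · exact h
          · exact absurd h hyS
      · refine ⟨x, ?_, hx⟩
        rcases x.2 with h | h
        · exact h
        · exact absurd h hxS
    obtain ⟨z, hzA, hzsimp⟩ := hone
    refine ⟨z, hzA, ?_⟩
    intro y hy w hw hyw
    have hys : y ∈ s := hmem z hzA y hy
    have hws : w ∈ s := hmem z hzA w hw
    have h1 : (⟨y, hys⟩ : ↥s) ∈ (G.induce s).neighborSet z := hy
    have h2 : (⟨w, hws⟩ : ↥s) ∈ (G.induce s).neighborSet z := hw
    have h3 : (⟨y, hys⟩ : ↥s) ≠ (⟨w, hws⟩ : ↥s) := by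
      simp only [ne_eq, Subtype.mk.injEq]
      exact hyw
    exact hzsimp h1 h2 h3

lemma dirac (n : ℕ) : ∀ (V : Type u) [Fintype V] (G : SimpleGraph V),
    Fintype.card V ≤ n → IsChordal G →
    G = ⊤ ∨ ∃ u v, u ≠ v ∧ ¬G.Adj u v ∧ IsSimplicialVertex G u ∧ IsSimplicialVertex G v := by
  induction n with
  | zero =>
    intro V _ G hc _
    left
    haveI : IsEmpty V := Fintype.card_eq_zero_iff.mp (by omega)
    ext x y
    exact (IsEmpty.false x).elim
  | succ n IH =>
    intro V _ G hcard hch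
    classical
    by_cases htop : G = ⊤
    · exact Or.inl htop
    right
    have hex : ∃ a b : V, a ≠ b ∧ ¬ G.Adj a b := by
      by_contra hcon
      push_neg at hcon
      apply htop
      ext x y
      simp only [SimpleGraph.top_adj]
      exact ⟨fun h => G.ne_of_adj h, fun h => hcon x y h⟩
    obtain ⟨a, b, hab, hnadj⟩ := hex
    have hPex : ∃ k, ∃ S : Finset V, S.card = k ∧ Separates G a b S :=
      ⟨_, _, rfl, separates_exists hab hnadj⟩
    obtain ⟨S, hScard, hSsep⟩ := Nat.find_spec hPex
    have hSmin : ∀ S' : Finset V, Separates G a b S' → S.card ≤ S'.card := by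
      intro S' h
      rw [hScard]
      exact Nat.find_min' hPex ⟨S', rfl, h⟩
    have hclique : G.IsClique (S : Set V) := sep_clique hch hSsep hSmin
    have haA : a ∈ Reach G S a := Reach.self hSsep.1
    have hbB : b ∈ Reach G S b := Reach.self hSsep.2.1
    have hbA : b ∉ Reach G S a := fun h => reach_disjoint hSsep h hbB
    have haB : a ∉ Reach G S b := fun h => reach_disjoint hSsep haA h
    obtain ⟨xa, hxaA, hxa⟩ := side_lemma IH hch hclique
      (fun x hx => Reach.not_mem_S hx)
      (fun x hx y hxy hyS => Reach.adj hx hxy hyS) haA hbA hSsep.2.1 hcard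
    obtain ⟨xb, hxbB, hxb⟩ := side_lemma IH hch hclique
      (fun x hx => Reach.not_mem_S hx)
      (fun x hx y hxy hyS => Reach.adj hx hxy hyS) hbB haB hSsep.1 hcard
    have hne := reach_nonadj hSsep hxaA hxbB
    exact ⟨xa, xb, hne.1, hne.2, hxa, hxb⟩

end ChordalAux

theorem stmt2 {V : Type*} [Fintype V] (G : SimpleGraph V) (hchord : IsChordal G)
    (hnc : G ≠ ⊤) :
    ∃ u v : V, u ≠ v ∧ ¬ G.Adj u v ∧ IsSimplicialVertex G u ∧ IsSimplicialVertex G v := by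
  rcases ChordalAux.dirac (Fintype.card V) V G le_rfl hchord with h | h
  · exact absurd h hnc
  · exact h
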